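/- Under the same compatibility assumptions, for all m, l, e, f ∈ ℤⁿ: Λ(B̃e − (Ĩ−R̃)m, B̃f − (Ĩ−R̃)l) = Λ((Ĩ−R̃)m, (Ĩ−R̃)l) + ⟨e,f⟩ − ⟨f,e⟩ − ⟨e,l⟩ + ⟨f,m⟩. -/

import Mathlib

open Matrix

section Aux

variable {m n : ℕ}

lemma aux_pair (Lam : Matrix (Fin m) (Fin m) ℤ) (X Y : Matrix (Fin m) (Fin n) ℤ)
    (u v : Fin n → ℤ) :
    (X.mulVec u) ⬝ᵥ Lam.mulVec (Y.mulVec v) = u ⬝ᵥ ((Xᵀ * (Lam * Y)).mulVec v) := by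
  rw [← mulVec_mulVec, ← mulVec_mulVec, ← vecMul_transpose, ← dotProduct_mulVec,
    mulVec_mulVec, mulVec_mulVec]

lemma aux_ItIt (hmn : n ≤ m)
    (It : Matrix (Fin m) (Fin n) ℤ)
    (hIt : It = Matrix.of fun (i : Fin m) (j : Fin n) => if (i : ℕ) = (j : ℕ) then (1 : ℤ) else 0) :
    Itᵀ * It = 1 := by
  subst hIt
  ext i j
  simp only [mul_apply, transpose_apply, of_apply]
  rw [Finset.sum_eq_single (Fin.castLE hmn i)]
  · by_cases h : (i : ℕ) = (j : ℕ)
    · simp [h, Fin.ext_iff, one_apply]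
    · simp [Fin.coe_castLE, h, one_apply, Fin.ext_iff]
  · intro b _ hb
    have : (b : ℕ) ≠ (i : ℕ) := by
      intro hc; exact hb (Fin.ext hc)
    simp [this]
  · simp

lemma aux_ItX (hmn : n ≤ m)
    (It X : Matrix (Fin m) (Fin n) ℤ)
    (hIt : It = Matrix.of fun (i : Fin m) (j : Fin n) => if (i : ℕ) = (j : ℕ) then (1 : ℤ) else 0) :
    ∀ i j : Fin n, (Itᵀ * X) i j = X (Fin.castLE hmn i) j := by
  subst hIt
  intro i j
  simp only [mul_apply, transpose_apply, of_apply]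
  rw [Finset.sum_eq_single (Fin.castLE hmn i)]
  · simp
  · intro b _ hb
    have : (b : ℕ) ≠ (i : ℕ) := by
      intro hc; exact hb (Fin.ext hc)
    simp [this]
  · simp

end Aux

theorem stmt3 (m n : ℕ) (hmn : n ≤ m)
    (Lam : Matrix (Fin m) (Fin m) ℤ)
    (Rt Bt It : Matrix (Fin m) (Fin n) ℤ)
    (R : Matrix (Fin n) (Fin n) ℤ)
    (hIt : It = Matrix.of fun (i : Fin m) (j : Fin n) => if (i : ℕ) = (j : ℕ) then (1 : ℤ) else 0)
    (hLam : Lamᵀ = -Lam)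
    (hB : Lam * Bt = -It)
    (hR : ∀ i j : Fin n, R i j = Rt (Fin.castLE hmn i) j)
    (hBR : ∀ i j : Fin n, Bt (Fin.castLE hmn i) j
        = Rt (Fin.castLE hmn j) i - Rt (Fin.castLE hmn i) j)
    (mv lv ev fv : Fin n → ℤ) :
    (Bt.mulVec ev - (It - Rt).mulVec mv) ⬝ᵥ
        Lam.mulVec (Bt.mulVec fv - (It - Rt).mulVec lv)
      = ((It - Rt).mulVec mv) ⬝ᵥ Lam.mulVec ((It - Rt).mulVec lv)
        + ev ⬝ᵥ (1 - R).mulVec fv - fv ⬝ᵥ (1 - R).mulVec ev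
        - ev ⬝ᵥ (1 - R).mulVec lv + fv ⬝ᵥ (1 - R).mulVec mv := by
  -- key matrix identities
  have hIR : Itᵀ * (It - Rt) = 1 - R := by
    rw [Matrix.mul_sub, aux_ItIt hmn It hIt]
    congr 1
    ext i j
    rw [aux_ItX hmn It Rt hIt, hR]
  have hItB : Itᵀ * Bt = Rᵀ - R := by
    ext i j
    rw [aux_ItX hmn It Bt hIt, hBR]
    simp [hR, transpose_apply, Matrix.sub_apply]
  have hBtLam : Btᵀ * Lam = Itᵀ := by
    have h1 : Btᵀ * Lamᵀ = -Itᵀ := by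
      rw [← transpose_mul, hB, transpose_neg]
    rw [hLam, Matrix.mul_neg] at h1
    linear_combination (norm := noncomm_ring) -h1
  -- the four pairings
  have T1 : (Bt.mulVec ev) ⬝ᵥ Lam.mulVec (Bt.mulVec fv)
      = ev ⬝ᵥ ((Rᵀ - R).mulVec fv) := by
    rw [aux_pair, ← Matrix.mul_assoc, hBtLam, hItB]
  have T2 : (Bt.mulVec ev) ⬝ᵥ Lam.mulVec ((It - Rt).mulVec lv)
      = ev ⬝ᵥ ((1 - R).mulVec lv) := by
    rw [aux_pair, ← Matrix.mul_assoc, hBtLam, hIR]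
  have T3 : ((It - Rt).mulVec mv) ⬝ᵥ Lam.mulVec (Bt.mulVec fv)
      = -(mv ⬝ᵥ ((1 - R)ᵀ.mulVec fv)) := by
    have hT : (It - Rt)ᵀ * It = (1 - R)ᵀ := by
      rw [← hIR, transpose_mul, transpose_transpose]
    rw [aux_pair, hB, Matrix.mul_neg, hT, Matrix.neg_mulVec, dotProduct_neg]
  -- transpose flips
  have flip : ∀ (A : Matrix (Fin n) (Fin n) ℤ) (u v : Fin n → ℤ),
      u ⬝ᵥ Aᵀ.mulVec v = v ⬝ᵥ A.mulVec u := by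
    intro A u v
    rw [dotProduct_mulVec, vecMul_transpose, dotProduct_comm]
  have hRT : ev ⬝ᵥ ((Rᵀ - R).mulVec fv)
      = ev ⬝ᵥ (1 - R).mulVec fv - fv ⬝ᵥ (1 - R).mulVec ev := by
    have h1 : ((1 : Matrix (Fin n) (Fin n) ℤ) - R)ᵀ = 1 - Rᵀ := by
      simp
    have h2 : fv ⬝ᵥ (1 - R).mulVec ev = ev ⬝ᵥ (1 - Rᵀ).mulVec fv := by
      rw [← h1, flip]
    rw [h2, ← dotProduct_sub, ← Matrix.sub_mulVec, sub_sub_sub_cancel_left]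
  have hfm : mv ⬝ᵥ ((1 - R)ᵀ.mulVec fv) = fv ⬝ᵥ (1 - R).mulVec mv := flip _ _ _
  rw [sub_dotProduct, mulVec_sub, dotProduct_sub, dotProduct_sub, T1, T2, T3, hRT, hfm]
  ring
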